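/- In any RRC market, if K is an optimal cutoff profile, then the induced matching μ(K) is direct-envy stable. -/

import Mathlib

namespace RRC

section Defs

variable (S C R : Type)

/-- A matching market with resource-regional caps (RRC).  Students `S`, colleges `C`,
non-empty resources `R`; the empty resource `r0` is represented by `none : Option R`. -/
structure Market where
  /-- quota of each college -/
  qC : C → ℕ
  qC_pos : ∀ c, 0 < qC c
  /-- quota of each non-empty resource -/
  qR : R → ℕ
  qR_pos : ∀ r, 0 < qR r
  /-- region of each non-empty resource (the region of `r0` is all of `C`) -/
  region : R → Finset C
  region_nonempty : ∀ r, (region r).Nonempty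
  /-- strict priority order of each college over students -/
  prC : C → S → S → Prop
  prC_sto : ∀ c, IsStrictTotalOrder S (prC c)
  /-- strict preference order of each student over `(C × R0) ∪ {∅}`;
  `none` is the outside option `∅` -/
  prS : S → Option (C × Option R) → Option (C × Option R) → Prop
  prS_sto : ∀ s, IsStrictTotalOrder (Option (C × Option R)) (prS s)

/-- A matching: each student appears in at most one contract, so a matching is a
function from students to optional (college, resource) pairs. -/
abbrev Matching := S → Option (C × Option R)

variable {S C R} [DecidableEq S]

/-- Number of contracts of the college `c` in `μ`. -/
noncomputable def collegeCount (μ : Matching S C R) (c : C) : ℕ :=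
  {s : S | ∃ r, μ s = some (c, r)}.ncard

/-- Number of contracts containing the non-empty resource `r` in `μ`. -/
noncomputable def resourceCount (μ : Matching S C R) (r : R) : ℕ :=
  {s : S | ∃ c, μ s = some (c, some r)}.ncard

/-- Feasibility: college quotas, resource quotas, and regions are respected. -/
def Feasible (M : Market S C R) (μ : Matching S C R) : Prop :=
  (∀ c, collegeCount μ c ≤ M.qC c) ∧
  (∀ r, resourceCount μ r ≤ M.qR r) ∧
  (∀ s c r, μ s = some (c, some r) → c ∈ M.region r)

/-- A pair `(c, r)` is acceptable for `s` if `s` prefers it to being unmatched. -/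
def Acceptable (M : Market S C R) (s : S) (c : C) (r : Option R) : Prop :=
  M.prS s (some (c, r)) none

/-- Individual rationality: no unacceptable contract is used. -/
def IndRational (M : Market S C R) (μ : Matching S C R) : Prop :=
  ∀ s x, μ s = some x → M.prS s (some x) none

/-- The contract `(s, c, r) ∉ μ` envy-blocks `μ` through `(s', c, r') ∈ μ`. -/
def EnvyBlocksThrough (M : Market S C R) (μ : Matching S C R)
    (s : S) (c : C) (r : Option R) (s' : S) (r' : Option R) : Prop :=
  μ s ≠ some (c, r) ∧ μ s' = some (c, r') ∧
  M.prS s (some (c, r)) (μ s) ∧ M.prC c s s' ∧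
  Feasible M (Function.update (Function.update μ s' none) s (some (c, r)))

def EnvyBlocks (M : Market S C R) (μ : Matching S C R)
    (s : S) (c : C) (r : Option R) : Prop :=
  ∃ s' r', EnvyBlocksThrough M μ s c r s' r'

def EnvyFree (M : Market S C R) (μ : Matching S C R) : Prop :=
  ∀ s c r, ¬ EnvyBlocks M μ s c r

/-- The contract `(s, c, r) ∉ μ` waste-blocks `μ`. -/
def WasteBlocks (M : Market S C R) (μ : Matching S C R)
    (s : S) (c : C) (r : Option R) : Prop :=
  μ s ≠ some (c, r) ∧ M.prS s (some (c, r)) (μ s) ∧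
  Feasible M (Function.update μ s (some (c, r)))

def NonWasteful (M : Market S C R) (μ : Matching S C R) : Prop :=
  ∀ s c r, ¬ WasteBlocks M μ s c r

/-- Stability: feasible, individually rational, no envy-blocking and no
waste-blocking contract. -/
def Stable (M : Market S C R) (μ : Matching S C R) : Prop :=
  Feasible M μ ∧ IndRational M μ ∧ EnvyFree M μ ∧ NonWasteful M μ

/-- `(s, c, r)` direct-envy-blocks `μ`: it envy-blocks through some `(s', c, r')`
with `r ∈ {r', r0}`. -/
def DirectEnvyBlocks (M : Market S C R) (μ : Matching S C R)
    (s : S) (c : C) (r : Option R) : Prop :=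
  ∃ s' r', EnvyBlocksThrough M μ s c r s' r' ∧ (r = r' ∨ r = none)

/-- The waste-blocking contract `(s, c, r)` is dominated by `(s', c, r') ∉ μ`. -/
def Dominates (M : Market S C R) (μ : Matching S C R)
    (s : S) (c : C) (r : Option R) (s' : S) (r' : Option R) : Prop :=
  μ s' ≠ some (c, r') ∧
  ¬ WasteBlocks M μ s' c r' ∧ ¬ DirectEnvyBlocks M μ s' c r' ∧
  DirectEnvyBlocks M (Function.update μ s (some (c, r))) s' c r'

/-- Direct-envy stability: feasible, individually rational, no direct-envy-blocking
contract, and every waste-blocking contract is dominated. -/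
def DirectEnvyStable (M : Market S C R) (μ : Matching S C R) : Prop :=
  Feasible M μ ∧ IndRational M μ ∧
  (∀ s c r, ¬ DirectEnvyBlocks M μ s c r) ∧
  (∀ s c r, WasteBlocks M μ s c r → ∃ s' r', Dominates M μ s c r s' r')

/-- Weak stability: no direct-envy-blocking contract, and every waste-blocking
contract involves a non-empty resource whose quota is fully used. -/
def WeaklyStable (M : Market S C R) (μ : Matching S C R) : Prop :=
  Feasible M μ ∧ IndRational M μ ∧
  (∀ s c r, ¬ DirectEnvyBlocks M μ s c r) ∧
  (∀ s c (r : Option R), WasteBlocks M μ s c r →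
    ∃ r₁, r = some r₁ ∧ resourceCount μ r₁ = M.qR r₁)

/-- A waste-blocking contract is resource-blocking if the student is already
admitted to the same college. -/
def ResourceBlocks (M : Market S C R) (μ : Matching S C R)
    (s : S) (c : C) (r : Option R) : Prop :=
  WasteBlocks M μ s c r ∧ ∃ r', μ s = some (c, r')

/-- A waste-blocking contract is seat-blocking if the student is not admitted to
the same college. -/
def SeatBlocks (M : Market S C R) (μ : Matching S C R)
    (s : S) (c : C) (r : Option R) : Prop :=
  WasteBlocks M μ s c r ∧ ¬ ∃ r', μ s = some (c, r')

def ResourceEfficient (M : Market S C R) (μ : Matching S C R) : Prop :=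
  ∀ s c r, ¬ ResourceBlocks M μ s c r

def SeatEfficient (M : Market S C R) (μ : Matching S C R) : Prop :=
  ∀ s c r, ¬ SeatBlocks M μ s c r

end Defs

section Cutoffs

variable {S C R : Type} [Fintype S]

/-- A cutoff profile: one cutoff per (college, resource) pair, bounded by the
number of students, with the cutoff for the empty resource the largest. -/
def IsCutoffProfile (St : Type) [Fintype St] {Co Re : Type}
    (K : Co → Option Re → ℕ) : Prop :=
  (∀ c r, K c r ≤ Fintype.card St) ∧ ∀ c (r : Re), K c (some r) ≤ K c none

/-- Rank of student `s` in the priority order of college `c` (0 = best). -/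
noncomputable def studentRank (M : Market S C R) (c : C) (s : S) : ℕ :=
  {s' : S | M.prC c s' s}.ncard

/-- `(s, c, r)` is permitted by the cutoff profile `K` if `s` is among the top
`K c r` students of `c`'s priority order. -/
noncomputable def Permitted (M : Market S C R) (K : C → Option R → ℕ)
    (s : S) (c : C) (r : Option R) : Prop :=
  studentRank M c s < K c r

/-- `μ` is the matching induced by the cutoff profile `K`: every student gets
their most preferred acceptable permitted contract, if any. -/
def IsInduced (M : Market S C R) (K : C → Option R → ℕ) (μ : Matching S C R) : Prop :=
  ∀ s : S,
    (∀ c r, μ s = some (c, r) →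
      Permitted M K s c r ∧ Acceptable M s c r ∧
      ∀ c' r', Permitted M K s c' r' → Acceptable M s c' r' →
        (c', r') ≠ (c, r) → M.prS s (some (c, r)) (some (c', r'))) ∧
    (μ s = none → ∀ c r, ¬ (Permitted M K s c r ∧ Acceptable M s c r))

/-- `K + 1_r^c`: increase the cutoff of `(c, r)` by one (simultaneously increasing
the cutoff of `(c, r0)` if it was equal to that of `(c, r)`). -/
def bump [DecidableEq C] [DecidableEq R] (K : C → Option R → ℕ)
    (c : C) (r : Option R) : C → Option R → ℕ :=
  fun c' r' =>
    if c' = c ∧ (r' = r ∨ (r' = none ∧ r ≠ none ∧ K c none = K c r)) then K c' r' + 1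
    else K c' r'

/-- An optimal cutoff profile: the induced matching is feasible, and increasing any
non-maximal cutoff yields an infeasible induced matching. -/
def OptimalCutoffs [DecidableEq C] [DecidableEq R]
    (M : Market S C R) (K : C → Option R → ℕ) : Prop :=
  IsCutoffProfile S K ∧
  (∀ μ, IsInduced M K μ → Feasible M μ) ∧
  ∀ c r, K c r < Fintype.card S →
    ∀ μ', IsInduced M (bump K c r) μ' → ¬ Feasible M μ'

end Cutoffs

section SD

variable {S C R : Type} [DecidableEq S]

/-- `x` is the most preferred contract of the (unmatched) student `s` given the
current matching `μ`: the best acceptable contract keeping the matching feasible,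
or `none` if there is no such contract. -/
def BestChoice (M : Market S C R) (μ : Matching S C R) (s : S)
    (x : Option (C × Option R)) : Prop :=
  match x with
  | some (c, r) =>
      Acceptable M s c r ∧ Feasible M (Function.update μ s (some (c, r))) ∧
      ∀ c' r', Acceptable M s c' r' → Feasible M (Function.update μ s (some (c', r'))) →
        (c', r') = (c, r) ∨ M.prS s (some (c, r)) (some (c', r'))
  | none => ∀ c r, ¬ (Acceptable M s c r ∧ Feasible M (Function.update μ s (some (c, r))))

/-- A run of the serial dictatorship mechanism on a list of students:
`SDRun M l μ μ'` holds if starting from `μ` and processing the students of `l`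
in order, each one receiving their most preferred feasible acceptable contract,
yields `μ'`. -/
inductive SDRun (M : Market S C R) : List S → Matching S C R → Matching S C R → Prop
  | nil (μ : Matching S C R) : SDRun M [] μ μ
  | cons (s : S) (l : List S) (μ : Matching S C R) (x : Option (C × Option R))
      (μ' : Matching S C R) (hx : BestChoice M μ s x)
      (h : SDRun M l (Function.update μ s x) μ') : SDRun M (s :: l) μ μ'

/-- Student `s` weakly prefers `x` to `y`. -/
def WeaklyPrefers (M : Market S C R) (s : S) (x y : Option (C × Option R)) : Prop :=
  x = y ∨ M.prS s x y

/-- Pareto efficiency for students. -/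
def ParetoEfficient (M : Market S C R) (μ : Matching S C R) : Prop :=
  ¬ ∃ μ' : Matching S C R, Feasible M μ' ∧
    (∀ s, WeaklyPrefers M s (μ' s) (μ s)) ∧ ∃ s, M.prS s (μ' s) (μ s)

end SD

/-- A strict total order induced by an injective rank function (rank 0 = best). -/
lemma isStrictTotalOrder_of_rank {α : Type*} (f : α → ℕ) (hf : Function.Injective f) :
    IsStrictTotalOrder α (fun x y => f x < f y) where
  trichotomous a b := by
    intro h1 h2
    rcases lt_trichotomy (f a) (f b) with h | h | h
    · exact absurd h h1
    · exact hf h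
    · exact absurd h h2
  irrefl a := lt_irrefl (f a)
  trans a b c h1 h2 := lt_trans h1 h2

end RRC

namespace RRC

section AuxLemmas

variable {S C R : Type} [DecidableEq S]

lemma sto_asymm {α : Type*} {rel : α → α → Prop} (h : IsStrictTotalOrder α rel) {a b : α}
    (h1 : rel a b) (h2 : rel b a) : False :=
  h.toIsStrictOrder.toIrrefl.irrefl a (h.toIsStrictOrder.toIsTrans.trans a b a h1 h2)

lemma rank_lt_rank [Finite S] (M : Market S C R) (c : C) {a b : S} (h : M.prC c a b) :
    studentRank M c a < studentRank M c b := by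
  have hT := (M.prC_sto c).toIsStrictOrder.toIsTrans
  have hI := (M.prC_sto c).toIsStrictOrder.toIrrefl
  apply Set.ncard_lt_ncard ?_ (Set.toFinite _)
  rw [Set.ssubset_def]
  constructor
  · intro x hx; exact hT.trans _ _ _ hx h
  · intro hsub; exact hI.irrefl a (hsub h)

lemma rank_lt_card [Fintype S] (M : Market S C R) (c : C) (a : S) :
    studentRank M c a < Fintype.card S := by
  have hI := (M.prC_sto c).toIsStrictOrder.toIrrefl
  have h : {x : S | M.prC c x a} ⊂ Set.univ := by
    rw [Set.ssubset_univ_iff]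
    intro h
    have ha : a ∈ {x : S | M.prC c x a} := by rw [h]; exact Set.mem_univ a
    exact hI.irrefl a ha
  have := Set.ncard_lt_ncard h (Set.toFinite _)
  rwa [Set.ncard_univ, Nat.card_eq_fintype_card] at this

lemma prC_of_rank_lt [Finite S] (M : Market S C R) (c : C) {a b : S}
    (h : studentRank M c a < studentRank M c b) : M.prC c a b := by
  rcases (haveI := (M.prC_sto c).toTrichotomous; trichotomous (r := M.prC c) a b) with h1 | rfl | h1
  · exact h1
  · exact absurd h (lt_irrefl _)
  · exact absurd (rank_lt_rank M c h1) (by omega)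

lemma rank_injective [Finite S] (M : Market S C R) (c : C) {a b : S}
    (h : studentRank M c a = studentRank M c b) : a = b := by
  rcases (haveI := (M.prC_sto c).toTrichotomous; trichotomous (r := M.prC c) a b) with h1 | rfl | h1
  · exact absurd (rank_lt_rank M c h1) (by omega)
  · rfl
  · exact absurd (rank_lt_rank M c h1) (by omega)

lemma exists_rank_eq [Fintype S] (M : Market S C R) (c : C) {k : ℕ}
    (hk : k < Fintype.card S) : ∃ a : S, studentRank M c a = k := by
  have hinj : Function.Injective (fun a : S => (⟨studentRank M c a, rank_lt_card M c a⟩ :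
      Fin (Fintype.card S))) := by
    intro a b h
    exact rank_injective M c (congrArg Fin.val h)
  have hbij : Function.Bijective (fun a : S => (⟨studentRank M c a, rank_lt_card M c a⟩ :
      Fin (Fintype.card S))) :=
    (Fintype.bijective_iff_injective_and_card _).2 ⟨hinj, by simp⟩
  obtain ⟨a, ha⟩ := hbij.2 ⟨k, hk⟩
  exact ⟨a, congrArg Fin.val ha⟩

lemma exists_max {α : Type*} {rel : α → α → Prop} (h : IsStrictTotalOrder α rel)
    (A : Finset α) (hA : A.Nonempty) : ∃ a ∈ A, ∀ b ∈ A, b ≠ a → rel a b := by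
  classical
  induction A using Finset.induction_on with
  | empty => exact absurd hA (by simp)
  | @insert x A hxA ih =>
    rcases A.eq_empty_or_nonempty with rfl | hAn
    · refine ⟨x, by simp, ?_⟩
      intro b hb hne
      simp only [Finset.mem_insert, Finset.notMem_empty, or_false] at hb
      exact absurd hb hne
    · obtain ⟨m, hm, hmax⟩ := ih hAn
      rcases (haveI := h.toTrichotomous; trichotomous (r := rel) x m) with hxm | heq | hmx
      · refine ⟨x, by simp, ?_⟩
        intro b hb hne
        rcases Finset.mem_insert.1 hb with rfl | hbA
        · exact absurd rfl hne
        · by_cases hbm : b = m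
          · exact hbm ▸ hxm
          · exact h.toIsStrictOrder.toIsTrans.trans _ _ _ hxm (hmax b hbA hbm)
      · subst heq
        refine ⟨x, Finset.mem_insert_of_mem hm, ?_⟩
        intro b hb hne
        rcases Finset.mem_insert.1 hb with rfl | hbA
        · exact absurd rfl hne
        · exact hmax b hbA hne
      · refine ⟨m, Finset.mem_insert_of_mem hm, ?_⟩
        intro b hb hne
        rcases Finset.mem_insert.1 hb with rfl | hbA
        · exact hmx
        · exact hmax b hbA hne

lemma exists_induced [Fintype C] [Fintype R] (M : Market S C R) (K : C → Option R → ℕ) :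
    ∃ μ : Matching S C R, IsInduced M K μ := by
  classical
  have hpt : ∀ s : S, ∃ y : Option (C × Option R),
      (∀ c r, y = some (c, r) →
        Permitted M K s c r ∧ Acceptable M s c r ∧
        ∀ c' r', Permitted M K s c' r' → Acceptable M s c' r' →
          (c', r') ≠ (c, r) → M.prS s (some (c, r)) (some (c', r'))) ∧
      (y = none → ∀ c r, ¬ (Permitted M K s c r ∧ Acceptable M s c r)) := by
    intro s
    set A : Finset (C × Option R) :=
      Finset.univ.filter (fun p => Permitted M K s p.1 p.2 ∧ Acceptable M s p.1 p.2) with hA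
    rcases A.eq_empty_or_nonempty with hAe | hAn
    · refine ⟨none, by simp, ?_⟩
      intro _ c r ⟨hp, ha⟩
      have : (c, r) ∈ A := by simp [hA, hp, ha]
      rw [hAe] at this
      exact absurd this (Finset.notMem_empty _)
    · have hsto : IsStrictTotalOrder (C × Option R)
          (fun p q => M.prS s (some p) (some q)) :=
        { trichotomous := fun p q h1 h2 =>
            Option.some.inj ((M.prS_sto s).toTrichotomous.trichotomous (some p) (some q) h1 h2)
          irrefl := fun p => (M.prS_sto s).toIsStrictOrder.toIrrefl.irrefl (some p)
          trans := fun p q u h1 h2 =>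
            (M.prS_sto s).toIsStrictOrder.toIsTrans.trans _ _ _ h1 h2 }
      obtain ⟨m, hm, hmax⟩ := exists_max hsto A hAn
      have hmA := hm
      rw [hA, Finset.mem_filter] at hmA
      refine ⟨some m, ?_, by simp⟩
      intro c r heq
      have hmeq : (c, r) = m := (Option.some.inj heq).symm
      subst hmeq
      refine ⟨hmA.2.1, hmA.2.2, ?_⟩
      intro c' r' hp ha hne
      exact hmax (c', r') (by simp [hA, hp, ha]) hne
  choose μ h using hpt
  exact ⟨μ, fun s => h s⟩

lemma acceptable_of_better (M : Market S C R) {K : C → Option R → ℕ} {μ : Matching S C R}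
    (hμ : IsInduced M K μ) {s : S} {c : C} {r : Option R}
    (h : M.prS s (some (c, r)) (μ s)) : Acceptable M s c r := by
  cases hms : μ s with
  | none => rw [hms] at h; exact h
  | some y =>
    obtain ⟨c₂, r₂⟩ := y
    rw [hms] at h
    have hy := (hμ s).1 c₂ r₂ hms
    exact (M.prS_sto s).toIsStrictOrder.toIsTrans.trans _ _ _ h hy.2.1

lemma not_permitted_of_better (M : Market S C R) {K : C → Option R → ℕ} {μ : Matching S C R}
    (hμ : IsInduced M K μ) {s : S} {c : C} {r : Option R}
    (h : M.prS s (some (c, r)) (μ s)) : ¬ Permitted M K s c r := by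
  intro hp
  have hacc := acceptable_of_better M hμ h
  cases hms : μ s with
  | none => exact (hμ s).2 hms c r ⟨hp, hacc⟩
  | some y =>
    obtain ⟨c₂, r₂⟩ := y
    rw [hms] at h
    have hne : (c, r) ≠ (c₂, r₂) := by
      rintro heq
      rw [heq] at h
      exact (M.prS_sto s).toIsStrictOrder.toIrrefl.irrefl _ h
    have := ((hμ s).1 c₂ r₂ hms).2.2 c r hp hacc hne
    exact sto_asymm (M.prS_sto s) h this

lemma no_direct_envy [Finite S] (M : Market S C R) {K : C → Option R → ℕ} {μ : Matching S C R}
    (hKp : ∀ c (r : R), K c (some r) ≤ K c none) (hμ : IsInduced M K μ) :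
    ∀ s c r, ¬ DirectEnvyBlocks M μ s c r := by
  rintro s c r ⟨s', r', ⟨hne, hs', hpref, hprC, _⟩, hdisj⟩
  have h1 : studentRank M c s' < K c r' := ((hμ s').1 c r' hs').1
  have h2 : studentRank M c s < studentRank M c s' := rank_lt_rank M c hprC
  have hle : K c r' ≤ K c r := by
    rcases hdisj with rfl | rfl
    · exact le_refl _
    · cases r' with
      | none => exact le_refl _
      | some r₁ => exact hKp c r₁
  exact not_permitted_of_better M hμ hpref (lt_of_lt_of_le (h2.trans h1) hle)

lemma feasible_swap [Finite S] (M : Market S C R) (σ : Matching S C R) (hσ : Feasible M σ)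
    (s s₂ : S) (c : C) (r rN : Option R) (hs : σ s = some (c, r)) (hrN : rN = r ∨ rN = none) :
    Feasible M (Function.update (Function.update σ s none) s₂ (some (c, rN))) := by
  classical
  obtain ⟨hC, hR, hreg⟩ := hσ
  set τ := Function.update (Function.update σ s none) s₂ (some (c, rN)) with hτ
  have hτval : ∀ t, t ≠ s₂ → t ≠ s → τ t = σ t := by
    intro t h2 h1
    rw [hτ, Function.update_of_ne h2, Function.update_of_ne h1]
  have hτs₂ : τ s₂ = some (c, rN) := by rw [hτ, Function.update_self]
  have hτs : s ≠ s₂ → τ s = none := by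
    intro h
    rw [hτ, Function.update_of_ne h, Function.update_self]
  have hmem_ne_s : ∀ {t : S} {y : C × Option R}, τ t = some y → t ≠ s₂ → t ≠ s := by
    intro t y ht h2 h1
    subst h1
    rw [hτs h2] at ht
    exact absurd ht (by simp)
  have hinj : ∀ (T : Set S), (∀ t ∈ T, ∃ y : C × Option R, τ t = some y) →
      Set.InjOn (fun t => if t = s₂ then s else t) T := by
    intro T hT a ha b hb hab
    dsimp at hab
    by_cases ha2 : a = s₂ <;> by_cases hb2 : b = s₂
    · rw [ha2, hb2]
    · rw [if_pos ha2, if_neg hb2] at hab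
      obtain ⟨y, hy⟩ := hT b hb
      exact absurd hab.symm (hmem_ne_s hy hb2)
    · rw [if_neg ha2, if_pos hb2] at hab
      obtain ⟨y, hy⟩ := hT a ha
      exact absurd hab (hmem_ne_s hy ha2)
    · rwa [if_neg ha2, if_neg hb2] at hab
  refine ⟨?_, ?_, ?_⟩
  · intro c'
    refine le_trans (Set.ncard_le_ncard_of_injOn (fun t => if t = s₂ then s else t) ?_ ?_
      (Set.toFinite _)) (hC c')
    · rintro t ⟨r'', ht⟩
      show ∃ r''', σ (if t = s₂ then s else t) = some (c', r''')
      by_cases h2 : t = s₂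
      · subst h2
        rw [hτs₂] at ht
        have hc' : c' = c := (congrArg Prod.fst (Option.some.inj ht)).symm
        rw [if_pos rfl, hc']
        exact ⟨r, hs⟩
      · have h1 : t ≠ s := hmem_ne_s ht h2
        rw [if_neg h2]
        exact ⟨r'', (hτval t h2 h1) ▸ ht⟩
    · exact hinj _ (by rintro t ⟨r'', ht⟩; exact ⟨_, ht⟩)
  · intro r₁
    refine le_trans (Set.ncard_le_ncard_of_injOn (fun t => if t = s₂ then s else t) ?_ ?_
      (Set.toFinite _)) (hR r₁)
    · rintro t ⟨c', ht⟩
      show ∃ c'', σ (if t = s₂ then s else t) = some (c'', some r₁)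
      by_cases h2 : t = s₂
      · subst h2
        rw [hτs₂] at ht
        have h3 : rN = some r₁ := congrArg Prod.snd (Option.some.inj ht)
        have hrr : r = some r₁ := by
          rcases hrN with rfl | rfl
          · exact h3
          · exact absurd h3 (by simp)
        rw [if_pos rfl]
        exact ⟨c, by rw [hs, hrr]⟩
      · have h1 : t ≠ s := hmem_ne_s ht h2
        rw [if_neg h2]
        exact ⟨c', (hτval t h2 h1) ▸ ht⟩
    · exact hinj _ (by rintro t ⟨c', ht⟩; exact ⟨_, ht⟩)
  · intro t c' r₁ ht
    by_cases h2 : t = s₂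
    · subst h2
      rw [hτs₂] at ht
      obtain ⟨hc', h3⟩ : c = c' ∧ rN = some r₁ :=
        ⟨congrArg Prod.fst (Option.some.inj ht), congrArg Prod.snd (Option.some.inj ht)⟩
      have hrr : r = some r₁ := by
        rcases hrN with rfl | rfl
        · exact h3
        · exact absurd h3 (by simp)
      exact hc' ▸ hreg s c r₁ (by rw [hs, hrr])
    · have h1 : t ≠ s := hmem_ne_s ht h2
      exact hreg t c' r₁ ((hτval t h2 h1) ▸ ht)

lemma induced_eq_of_perm_iff (M : Market S C R) {K K' : C → Option R → ℕ}
    {μ μ' : Matching S C R} (hμ : IsInduced M K μ) (hμ' : IsInduced M K' μ') (t : S)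
    (hiff : ∀ c r, Permitted M K t c r ↔ Permitted M K' t c r) : μ' t = μ t := by
  cases h1 : μ t with
  | none =>
    cases h2 : μ' t with
    | none => rfl
    | some z =>
      obtain ⟨c₂, r₂⟩ := z
      have hz := (hμ' t).1 c₂ r₂ h2
      exact absurd ⟨(hiff c₂ r₂).2 hz.1, hz.2.1⟩ ((hμ t).2 h1 c₂ r₂)
  | some y =>
    obtain ⟨c₁, r₁⟩ := y
    have hy := (hμ t).1 c₁ r₁ h1
    cases h2 : μ' t with
    | none => exact absurd ⟨(hiff c₁ r₁).1 hy.1, hy.2.1⟩ ((hμ' t).2 h2 c₁ r₁)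
    | some z =>
      obtain ⟨c₂, r₂⟩ := z
      have hz := (hμ' t).1 c₂ r₂ h2
      by_cases hne : (c₂, r₂) = (c₁, r₁)
      · rw [hne]
      · have p1 := hy.2.2 c₂ r₂ ((hiff c₂ r₂).2 hz.1) hz.2.1 hne
        have p2 := hz.2.2 c₁ r₁ ((hiff c₁ r₁).1 hy.1) hy.2.1 (fun h => hne h.symm)
        exact (sto_asymm (M.prS_sto t) p1 p2).elim

end AuxLemmas

/-- In any RRC market, if `K` is an optimal cutoff profile, then the
matching induced by `K` is direct-envy stable. -/
theorem induced_of_optimal_directEnvyStable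
    {S C R : Type} [Fintype S] [DecidableEq S] [Fintype C] [DecidableEq C]
    [Fintype R] [DecidableEq R]
    (M : Market S C R) (K : C → Option R → ℕ) (hK : OptimalCutoffs M K)
    (μ : Matching S C R) (hμ : IsInduced M K μ) :
    DirectEnvyStable M μ := by
  classical
  obtain ⟨⟨hKle, hKr0⟩, hfeasK, hopt⟩ := hK
  have hF : Feasible M μ := hfeasK μ hμ
  refine ⟨hF, ?_, no_direct_envy M hKr0 hμ, ?_⟩
  · rintro s ⟨c, r⟩ hx
    exact ((hμ s).1 c r hx).2.1
  · intro s c r hwb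
    obtain ⟨hne, hpref, hfeas'⟩ := hwb
    have hnp : ¬ Permitted M K s c r := not_permitted_of_better M hμ hpref
    have hks : K c r ≤ studentRank M c s := not_lt.1 hnp
    have hklt : K c r < Fintype.card S := lt_of_le_of_lt hks (rank_lt_card M c s)
    obtain ⟨sstar, hrank⟩ := exists_rank_eq M c hklt
    obtain ⟨μ'', hμ''⟩ := exists_induced M (bump K c r)
    have hinfeas : ¬ Feasible M μ'' := hopt c r hklt μ'' hμ''
    have hbump_le : ∀ c' r', K c' r' ≤ bump K c r c' r' := by
      intro c' r'
      unfold bump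
      split <;> omega
    have hperm_mono : ∀ t c' r', Permitted M K t c' r' → Permitted M (bump K c r) t c' r' :=
      fun t c' r' h => lt_of_lt_of_le h (hbump_le c' r')
    have hperm_rev : ∀ t, t ≠ sstar → ∀ c' r',
        Permitted M (bump K c r) t c' r' → Permitted M K t c' r' := by
      intro t ht c' r' h
      by_cases hcnd : c' = c ∧ (r' = r ∨ (r' = none ∧ r ≠ none ∧ K c none = K c r))
      · have hKeq : K c' r' = K c r := by
          obtain ⟨rfl, hd⟩ := hcnd
          rcases hd with rfl | ⟨rfl, _, he⟩
          · rfl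
          · exact he
        have hb : bump K c r c' r' = K c' r' + 1 := by unfold bump; rw [if_pos hcnd]
        have h' : studentRank M c' t < K c' r' + 1 := by rw [← hb]; exact h
        have hne' : studentRank M c' t ≠ K c' r' := by
          intro he
          have hct : studentRank M c t = K c r := by
            rw [← hKeq, ← he, hcnd.1]
          exact ht (rank_injective M c (hct.trans hrank.symm))
        show studentRank M c' t < K c' r'
        omega
      · have hb : bump K c r c' r' = K c' r' := by unfold bump; rw [if_neg hcnd]
        show studentRank M c' t < K c' r'
        rw [← hb]
        exact h
    have hagree : ∀ t, t ≠ sstar → μ'' t = μ t := fun t ht =>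
      induced_eq_of_perm_iff M hμ hμ'' t
        (fun c' r' => ⟨hperm_mono t c' r', hperm_rev t ht c' r'⟩)
    cases h2 : μ'' sstar with
    | none =>
      exfalso
      apply hinfeas
      have hms : μ sstar = none := by
        cases h1 : μ sstar with
        | none => rfl
        | some y =>
          obtain ⟨c₂, r₂⟩ := y
          have hy := (hμ sstar).1 c₂ r₂ h1
          exact absurd ⟨hperm_mono sstar c₂ r₂ hy.1, hy.2.1⟩ ((hμ'' sstar).2 h2 c₂ r₂)
      have : μ'' = μ := by
        funext t
        by_cases ht : t = sstar
        · subst ht; rw [h2, hms]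
        · exact hagree t ht
      rw [this]
      exact hF
    | some p =>
      obtain ⟨c₂, r₂⟩ := p
      have hperm' : Permitted M (bump K c r) sstar c₂ r₂ := ((hμ'' sstar).1 c₂ r₂ h2).1
      have hacc2 : Acceptable M sstar c₂ r₂ := ((hμ'' sstar).1 c₂ r₂ h2).2.1
      by_cases hpK : Permitted M K sstar c₂ r₂
      · exfalso
        apply hinfeas
        have hms : μ sstar = some (c₂, r₂) := by
          cases h1 : μ sstar with
          | none => exact absurd ⟨hpK, hacc2⟩ ((hμ sstar).2 h1 c₂ r₂)
          | some y =>
            obtain ⟨c₃, r₃⟩ := y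
            by_cases hne2 : (c₃, r₃) = (c₂, r₂)
            · exact congrArg some hne2
            · exfalso
              have ha := (hμ sstar).1 c₃ r₃ h1
              have hb := (hμ'' sstar).1 c₂ r₂ h2
              have p1 := ha.2.2 c₂ r₂ hpK hacc2 (fun h => hne2 h.symm)
              have p2 := hb.2.2 c₃ r₃ (hperm_mono sstar c₃ r₃ ha.1) ha.2.1 hne2
              exact sto_asymm (M.prS_sto sstar) p1 p2
        have : μ'' = μ := by
          funext t
          by_cases ht : t = sstar
          · subst ht; rw [h2, hms]
          · exact hagree t ht
        rw [this]
        exact hF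
      · have hcond : c₂ = c ∧ (r₂ = r ∨ (r₂ = none ∧ r ≠ none ∧ K c none = K c r)) := by
          by_contra hcnd
          apply hpK
          have hb : bump K c r c₂ r₂ = K c₂ r₂ := by unfold bump; rw [if_neg hcnd]
          show studentRank M c₂ sstar < K c₂ r₂
          rw [← hb]
          exact hperm'
        obtain ⟨hc2, hr2'⟩ := hcond
        rw [hc2] at h2 hperm' hacc2 hpK
        have hr2 : r₂ = r ∨ r₂ = none := hr2'.elim Or.inl (fun h => Or.inr h.1)
        have hμeq : μ'' = Function.update μ sstar (some (c, r₂)) := by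
          funext t
          by_cases ht : t = sstar
          · subst ht; rw [h2, Function.update_self]
          · rw [hagree t ht, Function.update_of_ne ht]
        have hinfeas2 : ¬ Feasible M (Function.update μ sstar (some (c, r₂))) := by
          rw [← hμeq]; exact hinfeas
        have hprefstar : M.prS sstar (some (c, r₂)) (μ sstar) := by
          cases h1 : μ sstar with
          | none => exact hacc2
          | some y =>
            obtain ⟨c₃, r₃⟩ := y
            have ha := (hμ sstar).1 c₃ r₃ h1
            have hne4 : (c₃, r₃) ≠ (c, r₂) := by
              intro heq
              apply hpK
              injection heq with hc3 hr3
              subst hc3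
              subst hr3
              exact ha.1
            exact ((hμ'' sstar).1 c r₂ h2).2.2 c₃ r₃ (hperm_mono sstar c₃ r₃ ha.1) ha.2.1 hne4
        have hsne : s ≠ sstar := by
          rintro rfl
          rcases hr2 with rfl | rfl
          · exact hinfeas2 hfeas'
          · apply hinfeas2
            have hfs : (Function.update μ s (some (c, r))) s = some (c, r) :=
              Function.update_self _ _ _
            have := feasible_swap M (Function.update μ s (some (c, r))) hfeas' s s c r none
              hfs (Or.inr rfl)
            have heq : Function.update (Function.update (Function.update μ s
                (some (c, r))) s none) s (some (c, (none : Option R))) =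
                Function.update μ s (some (c, (none : Option R))) := by
              funext t
              by_cases ht : t = s
              · subst ht; rw [Function.update_self, Function.update_self]
              · rw [Function.update_of_ne ht, Function.update_of_ne ht,
                  Function.update_of_ne ht, Function.update_of_ne ht]
            rwa [heq] at this
        have hμstar_ne : μ sstar ≠ some (c, r₂) := fun h1 => hpK ((hμ sstar).1 c r₂ h1).1
        have hprCss : M.prC c sstar s := by
          apply prC_of_rank_lt M c
          rw [hrank]
          rcases lt_or_eq_of_le hks with h | h
          · exact h
          · exact absurd (rank_injective M c (hrank.trans h)) (Ne.symm hsne)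
        refine ⟨sstar, r₂, hμstar_ne, ?_, no_direct_envy M hKr0 hμ sstar c r₂, ?_⟩
        · rintro ⟨_, _, hwf⟩
          exact hinfeas2 hwf
        · refine ⟨s, r, ⟨?_, Function.update_self _ _ _, ?_, hprCss, ?_⟩, hr2⟩
          · rw [Function.update_of_ne (Ne.symm hsne)]
            exact hμstar_ne
          · rw [Function.update_of_ne (Ne.symm hsne)]
            exact hprefstar
          · exact feasible_swap M (Function.update μ s (some (c, r))) hfeas' s sstar c r r₂
              (Function.update_self _ _ _) hr2

end RRC
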